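/- arXiv:2004.09177 — 2 statements merged into one kernel-verified Lean document; each statement's English description precedes it below -/
import Mathlib

section
/- For a kernel W with values in [-1,1], the cut norm of W is at most the L²[0,1] → L²[0,1] operator norm of the integral operator T_W, and the operator norm of T_W is at most √8 times the square root of the cut norm of W. -/
open MeasureTheory Set

lemma my_amgm (a b : ℝ) : |a * b| ≤ (a^2 + b^2)/2 := by
  rw [abs_mul]
  nlinarith [sq_nonneg (|a| - |b|), sq_abs a, sq_abs b, abs_nonneg a, abs_nonneg b]

lemma my_int_mul {μ : Measure ℝ} {u v : ℝ → ℝ}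
    (hu : AEStronglyMeasurable u μ) (hv : AEStronglyMeasurable v μ)
    (h2u : Integrable (fun x => u x ^ 2) μ) (h2v : Integrable (fun x => v x ^ 2) μ) :
    Integrable (fun x => u x * v x) μ := by
  refine Integrable.mono' ((h2u.add h2v).div_const 2) (hu.mul hv) ?_
  filter_upwards with x
  rw [Real.norm_eq_abs]
  exact le_trans (my_amgm _ _) (by simp [Pi.add_apply])

-- bounded measurable on finite-measure set is integrable
lemma my_bddInt {g : ℝ → ℝ} {s : Set ℝ} (hs : MeasurableSet s) (hsf : volume s < ⊤)
    (hg : AEStronglyMeasurable g (volume.restrict s)) {M : ℝ} (hM : ∀ x ∈ s, |g x| ≤ M) :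
    IntegrableOn g s := by
  refine Integrable.mono' ((integrableOn_const_iff (C := M)).2 (Or.inr hsf)) hg ?_
  exact ae_restrict_of_forall_mem hs (by simpa [Real.norm_eq_abs] using hM)

-- integrability on a product of restricted measures from a product bound
lemma my_prodInt {F : ℝ → ℝ → ℝ} (hF : Measurable (Function.uncurry F))
    {S T : Set ℝ} (hS : MeasurableSet S) (hT : MeasurableSet T)
    {φ ψ : ℝ → ℝ} (hφ : IntegrableOn φ S) (hψ : IntegrableOn ψ T)
    (hbd : ∀ x ∈ S, ∀ y ∈ T, |F x y| ≤ |φ x| * |ψ y|) :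
    Integrable (Function.uncurry F) ((volume.restrict S).prod (volume.restrict T)) := by
  refine Integrable.mono' (hφ.abs.mul_prod hψ.abs) hF.aestronglyMeasurable ?_
  rw [Measure.prod_restrict]
  refine ae_restrict_of_forall_mem (hS.prod hT) ?_
  rintro ⟨x, y⟩ ⟨hx, hy⟩
  simpa [Function.uncurry, Real.norm_eq_abs, abs_abs] using hbd x hx y hy

lemma my_swap {F : ℝ → ℝ → ℝ} (hF : Measurable (Function.uncurry F))
    {S T : Set ℝ} (hS : MeasurableSet S) (hT : MeasurableSet T)
    {φ ψ : ℝ → ℝ} (hφ : IntegrableOn φ S) (hψ : IntegrableOn ψ T)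
    (hbd : ∀ x ∈ S, ∀ y ∈ T, |F x y| ≤ |φ x| * |ψ y|) :
    ∫ x in S, ∫ y in T, F x y = ∫ y in T, ∫ x in S, F x y :=
  integral_integral_swap (my_prodInt hF hS hT hφ hψ hbd)


lemma my_cs_abs {μ : Measure ℝ} {u v : ℝ → ℝ}
    (hu : AEStronglyMeasurable u μ) (hv : AEStronglyMeasurable v μ)
    (h2u : Integrable (fun x => u x ^ 2) μ) (h2v : Integrable (fun x => v x ^ 2) μ) :
    ∫ x, |u x * v x| ∂μ ≤ Real.sqrt (∫ x, u x ^ 2 ∂μ) * Real.sqrt (∫ x, v x ^ 2 ∂μ) := by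
  have hint : Integrable (fun x => |u x * v x|) μ := (my_int_mul hu hv h2u h2v).abs
  have key : ∀ t : ℝ, 0 < t → ∫ x, |u x * v x| ∂μ ≤ (t * ∫ x, u x ^ 2 ∂μ + (1/t) * ∫ x, v x ^ 2 ∂μ)/2 := by
    intro t ht
    have step : ∫ x, |u x * v x| ∂μ ≤ ∫ x, (t * u x ^ 2 + (1/t) * v x ^ 2)/2 ∂μ := by
      refine integral_mono hint (((h2u.const_mul t).add (h2v.const_mul (1/t))).div_const 2) ?_
      intro x
      show |u x * v x| ≤ (t * u x ^ 2 + (1/t) * v x ^ 2)/2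
      have hst : Real.sqrt t ^ 2 = t := Real.sq_sqrt ht.le
      have h1 : |u x * v x| = |(Real.sqrt t * u x) * ((1/Real.sqrt t) * v x)| := by
        have : (Real.sqrt t * u x) * ((1/Real.sqrt t) * v x) = (Real.sqrt t * (1/Real.sqrt t)) * (u x * v x) := by ring
        rw [this]
        have h2 : Real.sqrt t * (1/Real.sqrt t) = 1 := by
          field_simp
        rw [h2, one_mul]
      rw [h1]
      refine le_trans (my_amgm _ _) ?_
      have e : (Real.sqrt t * u x)^2 = t * u x ^2 := by rw [mul_pow, hst]
      have e2 : ((1/Real.sqrt t) * v x)^2 = (1/t) * v x ^2 := by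
        rw [mul_pow, div_pow, one_pow, hst]
      rw [e, e2]
    refine le_trans step (le_of_eq ?_)
    rw [integral_div, integral_add (h2u.const_mul t) (h2v.const_mul (1/t)),
      integral_const_mul, integral_const_mul]
  set a := ∫ x, u x ^ 2 ∂μ with ha
  set b := ∫ x, v x ^ 2 ∂μ with hb
  have ha0 : 0 ≤ a := integral_nonneg fun x => sq_nonneg _
  have hb0 : 0 ≤ b := integral_nonneg fun x => sq_nonneg _
  rcases eq_or_lt_of_le ha0 with hA | hA
  · have hz : ∫ x, |u x * v x| ∂μ ≤ 0 := by
      refine le_of_forall_pos_le_add ?_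
      intro ε hε
      rcases eq_or_lt_of_le hb0 with hB | hB
      · have := key 1 one_pos
        rw [← hA, ← hB] at this
        simp only [mul_zero, add_zero, zero_div] at this
        linarith
      · have h := key (b/ε) (div_pos hB hε)
        have hbe : (1/(b/ε)) * b = ε := by field_simp
        rw [← hA, mul_zero, hbe] at h
        linarith
    exact le_trans hz (mul_nonneg (Real.sqrt_nonneg _) (Real.sqrt_nonneg _))
  · rcases eq_or_lt_of_le hb0 with hB | hB
    · have hz : ∫ x, |u x * v x| ∂μ ≤ 0 := by
        refine le_of_forall_pos_le_add ?_
        intro ε hε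
        have h := key (ε/a) (div_pos hε hA)
        rw [← hB, mul_zero] at h
        have h2 : (ε/a) * a = ε := by field_simp
        rw [h2] at h
        linarith
      exact le_trans hz (mul_nonneg (Real.sqrt_nonneg _) (Real.sqrt_nonneg _))
    · have hsa0 : 0 < Real.sqrt a := Real.sqrt_pos.2 hA
      have hsb0 : 0 < Real.sqrt b := Real.sqrt_pos.2 hB
      have ht : 0 < Real.sqrt b / Real.sqrt a := div_pos hsb0 hsa0
      have h := key _ ht
      have hsa : Real.sqrt a * Real.sqrt a = a := Real.mul_self_sqrt ha0
      have hsb : Real.sqrt b * Real.sqrt b = b := Real.mul_self_sqrt hb0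
      have e1 : (Real.sqrt b / Real.sqrt a) * a = Real.sqrt a * Real.sqrt b := by
        field_simp
        nlinarith [hsa]
      have e2 : (1/(Real.sqrt b / Real.sqrt a)) * b = Real.sqrt a * Real.sqrt b := by
        rw [one_div_div]
        field_simp
        nlinarith [hsb]
      rw [e1, e2] at h
      linarith

lemma my_cs {μ : Measure ℝ} {u v : ℝ → ℝ}
    (hu : AEStronglyMeasurable u μ) (hv : AEStronglyMeasurable v μ)
    (h2u : Integrable (fun x => u x ^ 2) μ) (h2v : Integrable (fun x => v x ^ 2) μ) :
    |∫ x, u x * v x ∂μ| ≤ Real.sqrt (∫ x, u x ^ 2 ∂μ) * Real.sqrt (∫ x, v x ^ 2 ∂μ) := by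
  refine le_trans ?_ (my_cs_abs hu hv h2u h2v)
  have h := norm_integral_le_integral_norm (μ := μ) (f := fun x => u x * v x)
  simp only [Real.norm_eq_abs] at h
  exact h

set_option maxHeartbeats 1000000

/-- For a kernel W with values in [-1,1], the cut norm is at most the
L²→L² operator norm of T_W, and the operator norm is at most √8 · √(cut norm). -/
theorem stmt1 (W : ℝ → ℝ → ℝ)
    (hMeas : Measurable (Function.uncurry W))
    (hSymm : ∀ x y, W x y = W y x)
    (hBdd : ∀ x ∈ Icc (0:ℝ) 1, ∀ y ∈ Icc (0:ℝ) 1, W x y ∈ Icc (-1:ℝ) 1)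
    (C : ℝ)
    (hC : IsLUB {r : ℝ | ∃ S T : Set ℝ, MeasurableSet S ∧ MeasurableSet T ∧
        S ⊆ Icc 0 1 ∧ T ⊆ Icc 0 1 ∧
        r = |∫ x in S, ∫ y in T, W x y|} C)
    (B : ℝ)
    (hB : IsLUB {r : ℝ | ∃ f : ℝ → ℝ, Measurable f ∧
        Real.sqrt (∫ x in Icc (0:ℝ) 1, f x ^ 2) = 1 ∧
        r = Real.sqrt (∫ x in Icc (0:ℝ) 1,
              (∫ y in Icc (0:ℝ) 1, W x y * f y) ^ 2)} B) :
    C ≤ B ∧ B ≤ Real.sqrt 8 * Real.sqrt C := by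
  have hIm : MeasurableSet (Icc (0:ℝ) 1) := measurableSet_Icc
  have hIfin : volume (Icc (0:ℝ) 1) < ⊤ := by
    rw [Real.volume_Icc]; exact ENNReal.ofReal_lt_top
  have hIone : (volume (Icc (0:ℝ) 1)).toReal = 1 := by
    rw [Real.volume_Icc]; norm_num
  have hWbd : ∀ x ∈ Icc (0:ℝ) 1, ∀ y ∈ Icc (0:ℝ) 1, |W x y| ≤ 1 := by
    intro x hx y hy
    have h := hBdd x hx y hy
    rw [abs_le]; exact ⟨h.1, h.2⟩
  have hC0 : 0 ≤ C := by
    refine hC.1 ⟨∅, ∅, MeasurableSet.empty, MeasurableSet.empty,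
      empty_subset _, empty_subset _, ?_⟩
    simp
  have cutbd : ∀ S T : Set ℝ, MeasurableSet S → MeasurableSet T → S ⊆ Icc 0 1 → T ⊆ Icc 0 1 →
      |∫ x in S, ∫ y in T, W x y| ≤ C :=
    fun S T hS hT hSs hTs => hC.1 ⟨S, T, hS, hT, hSs, hTs, rfl⟩
  -- measurability of the operator applied to a measurable function
  have Tmeas : ∀ h : ℝ → ℝ, Measurable h →
      Measurable (fun x => ∫ y in Icc (0:ℝ) 1, W x y * h y) := by
    intro h hh
    have hsm : StronglyMeasurable (fun p : ℝ × ℝ => W p.1 p.2 * h p.2) :=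
      ((hMeas.mul (hh.comp measurable_snd))).stronglyMeasurable
    exact hsm.integral_prod_right'.measurable
  -- subsets of Icc have finite measure
  have subfin : ∀ S : Set ℝ, S ⊆ Icc (0:ℝ) 1 → volume S < ⊤ :=
    fun S hS => lt_of_le_of_lt (measure_mono hS) hIfin
  have subone : ∀ S : Set ℝ, S ⊆ Icc (0:ℝ) 1 → (volume S).toReal ≤ 1 := by
    intro S hS
    rw [← hIone]
    exact ENNReal.toReal_mono (ne_of_lt hIfin) (measure_mono hS)
  -- pointwise bound of T h in terms of the L¹ norm of h
  have Tbd : ∀ h : ℝ → ℝ, Measurable h → IntegrableOn h (Icc (0:ℝ) 1) →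
      ∀ x ∈ Icc (0:ℝ) 1, |∫ y in Icc (0:ℝ) 1, W x y * h y| ≤ ∫ y in Icc (0:ℝ) 1, |h y| := by
    intro h hh hint x hx
    have hmeasy : Measurable (fun y => W x y * h y) :=
      (hMeas.comp measurable_prodMk_left).mul hh
    have hint2 : IntegrableOn (fun y => W x y * h y) (Icc (0:ℝ) 1) := by
      refine Integrable.mono' hint.abs hmeasy.aestronglyMeasurable ?_
      refine ae_restrict_of_forall_mem hIm ?_
      intro y hy
      rw [Real.norm_eq_abs, abs_mul]
      calc |W x y| * |h y| ≤ 1 * |h y| :=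
            mul_le_mul_of_nonneg_right (hWbd x hx y hy) (abs_nonneg _)
      _ = |h y| := one_mul _
    have e : (fun y => |W x y| * |h y|) = fun y => |W x y * h y| :=
      funext fun y => (abs_mul _ _).symm
    calc |∫ y in Icc (0:ℝ) 1, W x y * h y| ≤ ∫ y in Icc (0:ℝ) 1, |W x y| * |h y| := by
          have := norm_integral_le_integral_norm (μ := volume.restrict (Icc (0:ℝ) 1))
            (f := fun y => W x y * h y)
          simpa [Real.norm_eq_abs] using this
    _ ≤ ∫ y in Icc (0:ℝ) 1, |h y| := by
          rw [e]
          refine integral_mono_ae hint2.abs hint.abs ?_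
          refine ae_restrict_of_forall_mem hIm ?_
          intro y hy
          show |W x y * h y| ≤ |h y|
          rw [abs_mul]
          calc |W x y| * |h y| ≤ 1 * |h y| :=
                mul_le_mul_of_nonneg_right (hWbd x hx y hy) (abs_nonneg _)
          _ = |h y| := one_mul _
  -- key cut-norm bound: integral of T h over a subset
  have key1 : ∀ (h : ℝ → ℝ) (M : ℝ), Measurable h → 0 ≤ M → (∀ y ∈ Icc (0:ℝ) 1, |h y| ≤ M) →
      ∀ H : Set ℝ, MeasurableSet H → H ⊆ Icc 0 1 →
      |∫ x in H, ∫ y in Icc (0:ℝ) 1, W x y * h y| ≤ 2*C*M := by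
    intro h M hh hM0 hhb H hHm hHs
    set k : ℝ → ℝ := fun y => ∫ x in H, W x y with hk
    have kmeas : Measurable k := by
      have hsm : StronglyMeasurable (fun p : ℝ × ℝ => W p.1 p.2) := hMeas.stronglyMeasurable
      exact hsm.integral_prod_left'.measurable
    have kbd : ∀ y ∈ Icc (0:ℝ) 1, |k y| ≤ 1 := by
      intro y hy
      have : ‖∫ x in H, W x y‖ ≤ 1 * (volume H).toReal := by
        refine norm_setIntegral_le_of_norm_le_const (subfin H hHs) ?_
        · intro x hx
          rw [Real.norm_eq_abs]
          exact hWbd x (hHs hx) y hy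
      rw [Real.norm_eq_abs, one_mul] at this
      exact le_trans this (subone H hHs)
    -- swap the integrals
    have hswap : ∫ x in H, ∫ y in Icc (0:ℝ) 1, W x y * h y
        = ∫ y in Icc (0:ℝ) 1, ∫ x in H, W x y * h y := by
      refine my_swap (F := fun x y => W x y * h y)
        (by exact hMeas.mul (hh.comp measurable_snd)) hHm hIm (φ := fun _ => (1:ℝ))
        (ψ := fun y => M)
        ((integrableOn_const_iff (C := (1:ℝ))).2 (Or.inr (subfin H hHs)))
        ((integrableOn_const_iff (C := M)).2 (Or.inr hIfin)) ?_
      intro x hx y hy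
      simp only [abs_one, one_mul]
      rw [abs_mul]
      calc |W x y| * |h y| ≤ 1 * M :=
        mul_le_mul (hWbd x (hHs hx) y hy) (hhb y hy) (abs_nonneg _) zero_le_one
      _ ≤ |M| := by rw [one_mul]; exact le_abs_self M
    have hinner : ∀ y : ℝ, ∫ x in H, W x y * h y = k y * h y := by
      intro y
      exact integral_mul_const (h y) (fun x => W x y)
    have hkh : ∫ x in H, ∫ y in Icc (0:ℝ) 1, W x y * h y = ∫ y in Icc (0:ℝ) 1, k y * h y := by
      rw [hswap]
      exact integral_congr_ae (Filter.Eventually.of_forall hinner)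
    -- bound ∫ |k| by 2C
    have intk : IntegrableOn k (Icc (0:ℝ) 1) :=
      my_bddInt hIm hIfin kmeas.aestronglyMeasurable kbd
    have hPm : MeasurableSet (Icc (0:ℝ) 1 ∩ {y | 0 ≤ k y}) :=
      hIm.inter (measurableSet_le measurable_const kmeas)
    have hNm : MeasurableSet (Icc (0:ℝ) 1 ∩ {y | k y < 0}) :=
      hIm.inter (measurableSet_lt kmeas measurable_const)
    have hsplit : Icc (0:ℝ) 1 = (Icc (0:ℝ) 1 ∩ {y | 0 ≤ k y}) ∪ (Icc (0:ℝ) 1 ∩ {y | k y < 0}) := by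
      rw [← inter_union_distrib_left]
      have : {y : ℝ | 0 ≤ k y} ∪ {y | k y < 0} = univ := by
        ext y; simp [le_or_gt]
      rw [this, inter_univ]
    have hdisj : Disjoint (Icc (0:ℝ) 1 ∩ {y | 0 ≤ k y}) (Icc (0:ℝ) 1 ∩ {y | k y < 0}) := by
      refine Set.disjoint_left.2 ?_
      rintro y ⟨-, hy1⟩ ⟨-, hy2⟩
      simp only [mem_setOf_eq] at hy1 hy2
      exact (not_lt.2 hy1) hy2
    have hintP : |∫ y in Icc (0:ℝ) 1 ∩ {y | 0 ≤ k y}, k y| ≤ C := by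
      have hsub : Icc (0:ℝ) 1 ∩ {y | 0 ≤ k y} ⊆ Icc 0 1 := inter_subset_left
      have : ∫ y in Icc (0:ℝ) 1 ∩ {y | 0 ≤ k y}, k y
          = ∫ x in H, ∫ y in Icc (0:ℝ) 1 ∩ {y | 0 ≤ k y}, W x y := by
        refine (my_swap hMeas hHm hPm (φ := fun _ => (1:ℝ)) (ψ := fun _ => (1:ℝ))
          ((integrableOn_const_iff (C := (1:ℝ))).2 (Or.inr (subfin H hHs)))
          ((integrableOn_const_iff (C := (1:ℝ))).2 (Or.inr (subfin _ hsub))) ?_).symm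
        intro x hx y hy
        simp only [abs_one, one_mul]
        exact hWbd x (hHs hx) y (hsub hy)
      rw [this]
      exact cutbd H _ hHm hPm hHs hsub
    have hintN : |∫ y in Icc (0:ℝ) 1 ∩ {y | k y < 0}, k y| ≤ C := by
      have hsub : Icc (0:ℝ) 1 ∩ {y | k y < 0} ⊆ Icc 0 1 := inter_subset_left
      have : ∫ y in Icc (0:ℝ) 1 ∩ {y | k y < 0}, k y
          = ∫ x in H, ∫ y in Icc (0:ℝ) 1 ∩ {y | k y < 0}, W x y := by
        refine (my_swap hMeas hHm hNm (φ := fun _ => (1:ℝ)) (ψ := fun _ => (1:ℝ))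
          ((integrableOn_const_iff (C := (1:ℝ))).2 (Or.inr (subfin H hHs)))
          ((integrableOn_const_iff (C := (1:ℝ))).2 (Or.inr (subfin _ hsub))) ?_).symm
        intro x hx y hy
        simp only [abs_one, one_mul]
        exact hWbd x (hHs hx) y (hsub hy)
      rw [this]
      exact cutbd H _ hHm hNm hHs hsub
    have habsk : ∫ y in Icc (0:ℝ) 1, |k y| ≤ 2*C := by
      have e1 : ∫ y in Icc (0:ℝ) 1, |k y|
          = (∫ y in Icc (0:ℝ) 1 ∩ {y | 0 ≤ k y}, |k y|)
            + ∫ y in Icc (0:ℝ) 1 ∩ {y | k y < 0}, |k y| := by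
        conv_lhs => rw [hsplit]
        have intkabs : IntegrableOn (fun y => |k y|) (Icc (0:ℝ) 1) := intk.abs
        exact setIntegral_union hdisj hNm (intkabs.mono_set inter_subset_left)
          (intkabs.mono_set inter_subset_left)
      have e2 : ∫ y in Icc (0:ℝ) 1 ∩ {y | 0 ≤ k y}, |k y|
          = ∫ y in Icc (0:ℝ) 1 ∩ {y | 0 ≤ k y}, k y :=
        setIntegral_congr_fun hPm (fun y hy => abs_of_nonneg hy.2)
      have e3 : ∫ y in Icc (0:ℝ) 1 ∩ {y | k y < 0}, |k y|
          = - ∫ y in Icc (0:ℝ) 1 ∩ {y | k y < 0}, k y := by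
        rw [← integral_neg]
        exact setIntegral_congr_fun hNm (fun y hy => abs_of_neg hy.2)
      rw [e1, e2, e3]
      have h1 := abs_le.1 hintP
      have h2 := abs_le.1 hintN
      linarith [h1.2, h2.1]
    -- final estimate
    have intkh : IntegrableOn (fun y => k y * h y) (Icc (0:ℝ) 1) := by
      refine my_bddInt hIm hIfin (kmeas.mul hh).aestronglyMeasurable (M := M) ?_
      intro y hy
      rw [abs_mul]
      calc |k y| * |h y| ≤ 1 * M :=
        mul_le_mul (kbd y hy) (hhb y hy) (abs_nonneg _) zero_le_one
      _ = M := one_mul M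
    rw [hkh]
    calc |∫ y in Icc (0:ℝ) 1, k y * h y| ≤ ∫ y in Icc (0:ℝ) 1, |k y| * M := by
          have h1 : |∫ y in Icc (0:ℝ) 1, k y * h y| ≤ ∫ y in Icc (0:ℝ) 1, |k y| * |h y| := by
            have := norm_integral_le_integral_norm (μ := volume.restrict (Icc (0:ℝ) 1))
              (f := fun y => k y * h y)
            simpa [Real.norm_eq_abs] using this
          refine le_trans h1 ?_
          refine integral_mono_ae ?_ (intk.abs.mul_const M) ?_
          · have e : (fun y => |k y| * |h y|) = fun y => |k y * h y| :=
              funext fun y => (abs_mul _ _).symm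
            rw [e]; exact intkh.abs
          · refine ae_restrict_of_forall_mem hIm ?_
            intro y hy
            exact mul_le_mul_of_nonneg_left (hhb y hy) (abs_nonneg _)
    _ = (∫ y in Icc (0:ℝ) 1, |k y|) * M := integral_mul_const M _
    _ ≤ (2*C) * M := mul_le_mul_of_nonneg_right habsk hM0
    _ = 2*C*M := rfl
  -- L¹ bound for T h when h is bounded
  have key2 : ∀ (h : ℝ → ℝ) (M : ℝ), Measurable h → 0 ≤ M → (∀ y ∈ Icc (0:ℝ) 1, |h y| ≤ M) →
      ∫ x in Icc (0:ℝ) 1, |∫ y in Icc (0:ℝ) 1, W x y * h y| ≤ 4*C*M := by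
    intro h M hh hM0 hhb
    set Th : ℝ → ℝ := fun x => ∫ y in Icc (0:ℝ) 1, W x y * h y with hTh
    have Thm : Measurable Th := Tmeas h hh
    have Thbd : ∀ x ∈ Icc (0:ℝ) 1, |Th x| ≤ M := by
      intro x hx
      have : ‖∫ y in Icc (0:ℝ) 1, W x y * h y‖ ≤ M * (volume (Icc (0:ℝ) 1)).toReal := by
        refine norm_setIntegral_le_of_norm_le_const hIfin ?_
        · intro y hy
          rw [Real.norm_eq_abs, abs_mul]
          calc |W x y| * |h y| ≤ 1 * M :=
            mul_le_mul (hWbd x hx y hy) (hhb y hy) (abs_nonneg _) zero_le_one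
          _ = M := one_mul M
      rw [Real.norm_eq_abs, hIone, mul_one] at this
      exact this
    have intTh : IntegrableOn Th (Icc (0:ℝ) 1) :=
      my_bddInt hIm hIfin Thm.aestronglyMeasurable Thbd
    have hPm : MeasurableSet (Icc (0:ℝ) 1 ∩ {x | 0 ≤ Th x}) :=
      hIm.inter (measurableSet_le measurable_const Thm)
    have hNm : MeasurableSet (Icc (0:ℝ) 1 ∩ {x | Th x < 0}) :=
      hIm.inter (measurableSet_lt Thm measurable_const)
    have hsplit : Icc (0:ℝ) 1 = (Icc (0:ℝ) 1 ∩ {x | 0 ≤ Th x}) ∪ (Icc (0:ℝ) 1 ∩ {x | Th x < 0}) := by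
      rw [← inter_union_distrib_left]
      have : {x : ℝ | 0 ≤ Th x} ∪ {x | Th x < 0} = univ := by
        ext x; simp [le_or_gt]
      rw [this, inter_univ]
    have hdisj : Disjoint (Icc (0:ℝ) 1 ∩ {x | 0 ≤ Th x}) (Icc (0:ℝ) 1 ∩ {x | Th x < 0}) := by
      refine Set.disjoint_left.2 ?_
      rintro x ⟨-, hx1⟩ ⟨-, hx2⟩
      simp only [mem_setOf_eq] at hx1 hx2
      exact (not_lt.2 hx1) hx2
    have hP : |∫ x in Icc (0:ℝ) 1 ∩ {x | 0 ≤ Th x}, Th x| ≤ 2*C*M :=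
      key1 h M hh hM0 hhb _ hPm inter_subset_left
    have hN : |∫ x in Icc (0:ℝ) 1 ∩ {x | Th x < 0}, Th x| ≤ 2*C*M :=
      key1 h M hh hM0 hhb _ hNm inter_subset_left
    have e1 : ∫ x in Icc (0:ℝ) 1, |Th x|
        = (∫ x in Icc (0:ℝ) 1 ∩ {x | 0 ≤ Th x}, |Th x|)
          + ∫ x in Icc (0:ℝ) 1 ∩ {x | Th x < 0}, |Th x| := by
      conv_lhs => rw [hsplit]
      have intabs : IntegrableOn (fun x => |Th x|) (Icc (0:ℝ) 1) := intTh.abs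
      exact setIntegral_union hdisj hNm (intabs.mono_set inter_subset_left)
        (intabs.mono_set inter_subset_left)
    have e2 : ∫ x in Icc (0:ℝ) 1 ∩ {x | 0 ≤ Th x}, |Th x|
        = ∫ x in Icc (0:ℝ) 1 ∩ {x | 0 ≤ Th x}, Th x :=
      setIntegral_congr_fun hPm (fun x hx => abs_of_nonneg hx.2)
    have e3 : ∫ x in Icc (0:ℝ) 1 ∩ {x | Th x < 0}, |Th x|
        = - ∫ x in Icc (0:ℝ) 1 ∩ {x | Th x < 0}, Th x := by
      rw [← integral_neg]
      exact setIntegral_congr_fun hNm (fun x hx => abs_of_neg hx.2)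
    rw [e1, e2, e3]
    have h1 := abs_le.1 hP
    have h2 := abs_le.1 hN
    linarith [h1.2, h2.1]
  -- B is nonnegative
  have hB0 : 0 ≤ B := by
    have hmem : (Real.sqrt (∫ x in Icc (0:ℝ) 1,
        (∫ y in Icc (0:ℝ) 1, W x y * (Icc (0:ℝ) 1).indicator (fun _ => (1:ℝ)) y) ^ 2)) ∈
        {r : ℝ | ∃ f : ℝ → ℝ, Measurable f ∧
          Real.sqrt (∫ x in Icc (0:ℝ) 1, f x ^ 2) = 1 ∧
          r = Real.sqrt (∫ x in Icc (0:ℝ) 1,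
              (∫ y in Icc (0:ℝ) 1, W x y * f y) ^ 2)} := by
      refine ⟨(Icc (0:ℝ) 1).indicator (fun _ => (1:ℝ)), measurable_const.indicator hIm, ?_, rfl⟩
      have : ∫ x in Icc (0:ℝ) 1, ((Icc (0:ℝ) 1).indicator (fun _ => (1:ℝ)) x) ^ 2 = 1 := by
        have e : ∀ x ∈ Icc (0:ℝ) 1, ((Icc (0:ℝ) 1).indicator (fun _ => (1:ℝ)) x) ^ 2 = 1 := by
          intro x hx
          rw [indicator_of_mem hx]; norm_num
        rw [setIntegral_congr_fun hIm e]
        simp [hIone]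
      rw [this, Real.sqrt_one]
    exact le_trans (Real.sqrt_nonneg _) (hB.1 hmem)
  -- Part 1 : C ≤ B
  have part1 : C ≤ B := by
    refine hC.2 ?_
    rintro r ⟨S, T, hS, hT, hSs, hTs, rfl⟩
    by_cases hT0 : volume T = 0
    · have : ∀ x : ℝ, ∫ y in T, W x y = 0 := by
        intro x
        rw [Measure.restrict_eq_zero.2 hT0, integral_zero_measure]
      simp only [this, integral_zero, abs_zero]
      exact hB0
    · set m : ℝ := (volume T).toReal with hm
      have hmpos : 0 < m := ENNReal.toReal_pos hT0 (ne_of_lt (subfin T hTs))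
      have hm1 : m ≤ 1 := subone T hTs
      set cT : ℝ := 1 / Real.sqrt m with hcT
      have hsm : 0 < Real.sqrt m := Real.sqrt_pos.2 hmpos
      have hcT0 : 0 < cT := by positivity
      set f : ℝ → ℝ := T.indicator (fun _ => cT) with hf
      have hfm : Measurable f := measurable_const.indicator hT
      -- the inner integral with f
      set k : ℝ → ℝ := fun x => ∫ y in T, W x y with hk
      have kmeas : Measurable k := by
        have hsm2 : StronglyMeasurable (fun p : ℝ × ℝ => W p.1 p.2) := hMeas.stronglyMeasurable
        exact hsm2.integral_prod_right'.measurable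
      have kbd : ∀ x ∈ Icc (0:ℝ) 1, |k x| ≤ 1 := by
        intro x hx
        have : ‖∫ y in T, W x y‖ ≤ 1 * (volume T).toReal := by
          refine norm_setIntegral_le_of_norm_le_const (subfin T hTs) ?_
          · intro y hy
            rw [Real.norm_eq_abs]
            exact hWbd x hx y (hTs hy)
        rw [Real.norm_eq_abs, one_mul] at this
        exact le_trans this (subone T hTs)
      have hinner : ∀ x : ℝ, ∫ y in Icc (0:ℝ) 1, W x y * f y = k x * cT := by
        intro x
        have e : ∀ y : ℝ, W x y * f y = T.indicator (fun y' => W x y' * cT) y := by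
          intro y
          by_cases hy : y ∈ T
          · rw [hf, indicator_of_mem hy, indicator_of_mem hy]
          · rw [hf, indicator_of_notMem hy, indicator_of_notMem hy, mul_zero]
        rw [integral_congr_ae (Filter.Eventually.of_forall e), setIntegral_indicator hT,
          inter_eq_self_of_subset_right hTs]
        exact integral_mul_const cT (fun y => W x y)
      -- f is normalized
      have hnorm : Real.sqrt (∫ x in Icc (0:ℝ) 1, f x ^ 2) = 1 := by
        have e : ∀ x : ℝ, f x ^ 2 = T.indicator (fun _ => cT ^ 2) x := by
          intro x
          by_cases hx : x ∈ T
          · rw [hf, indicator_of_mem hx, indicator_of_mem hx]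
          · rw [hf, indicator_of_notMem hx, indicator_of_notMem hx]; norm_num
        have : ∫ x in Icc (0:ℝ) 1, f x ^ 2 = m * cT ^ 2 := by
          rw [integral_congr_ae (Filter.Eventually.of_forall e), setIntegral_indicator hT,
            inter_eq_self_of_subset_right hTs, setIntegral_const, smul_eq_mul, measureReal_def]
        rw [this, hcT]
        rw [div_pow, one_pow, Real.sq_sqrt hmpos.le]
        rw [mul_one_div, div_self (ne_of_gt hmpos), Real.sqrt_one]
      have hrf : Real.sqrt (∫ x in Icc (0:ℝ) 1,
          (∫ y in Icc (0:ℝ) 1, W x y * f y) ^ 2) ≤ B :=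
        hB.1 ⟨f, hfm, hnorm, rfl⟩
      have hrw : ∫ x in Icc (0:ℝ) 1, (∫ y in Icc (0:ℝ) 1, W x y * f y) ^ 2
          = (∫ x in Icc (0:ℝ) 1, k x ^ 2) * cT ^ 2 := by
        rw [← integral_mul_const]
        refine integral_congr_ae (Filter.Eventually.of_forall ?_)
        intro x
        show (∫ y in Icc (0:ℝ) 1, W x y * f y) ^ 2 = k x ^ 2 * cT ^ 2
        rw [hinner x]; ring
      have hkk0 : 0 ≤ ∫ x in Icc (0:ℝ) 1, k x ^ 2 := integral_nonneg fun x => sq_nonneg _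
      have hsqrtk : Real.sqrt (∫ x in Icc (0:ℝ) 1, k x ^ 2) ≤ B * Real.sqrt m := by
        have h1 : Real.sqrt ((∫ x in Icc (0:ℝ) 1, k x ^ 2) * cT ^ 2)
            = Real.sqrt (∫ x in Icc (0:ℝ) 1, k x ^ 2) * cT := by
          rw [Real.sqrt_mul hkk0, Real.sqrt_sq hcT0.le]
        rw [hrw, h1] at hrf
        have := mul_le_mul_of_nonneg_right hrf hsm.le
        have e2 : cT * Real.sqrt m = 1 := by
          rw [hcT]; field_simp
        calc Real.sqrt (∫ x in Icc (0:ℝ) 1, k x ^ 2)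
            = Real.sqrt (∫ x in Icc (0:ℝ) 1, k x ^ 2) * (cT * Real.sqrt m) := by
              rw [e2, mul_one]
        _ = Real.sqrt (∫ x in Icc (0:ℝ) 1, k x ^ 2) * cT * Real.sqrt m := by ring
        _ ≤ B * Real.sqrt m := this
      have hBm : B * Real.sqrt m ≤ B :=
        calc B * Real.sqrt m ≤ B * 1 :=
              mul_le_mul_of_nonneg_left (by
                rw [show (1:ℝ) = Real.sqrt 1 by rw [Real.sqrt_one]]
                exact Real.sqrt_le_sqrt hm1) hB0
        _ = B := mul_one B
      -- Cauchy–Schwarz with the indicator of S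
      set u : ℝ → ℝ := S.indicator (fun _ => (1:ℝ)) with hu
      have hum : Measurable u := measurable_const.indicator hS
      have hSk : ∫ x in S, k x = ∫ x in Icc (0:ℝ) 1, u x * k x := by
        have e : ∀ x : ℝ, u x * k x = S.indicator k x := by
          intro x
          by_cases hx : x ∈ S
          · rw [hu, indicator_of_mem hx, indicator_of_mem hx, one_mul]
          · rw [hu, indicator_of_notMem hx, indicator_of_notMem hx, zero_mul]
        rw [integral_congr_ae (Filter.Eventually.of_forall e), setIntegral_indicator hS,
          inter_eq_self_of_subset_right hSs]
      have hu2 : ∫ x in Icc (0:ℝ) 1, u x ^ 2 = (volume S).toReal := by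
        have e : ∀ x : ℝ, u x ^ 2 = S.indicator (fun _ => (1:ℝ)) x := by
          intro x
          by_cases hx : x ∈ S
          · simp [hu, indicator_of_mem hx]
          · simp [hu, indicator_of_notMem hx]
        rw [integral_congr_ae (Filter.Eventually.of_forall e), setIntegral_indicator hS,
          inter_eq_self_of_subset_right hSs, setIntegral_const, smul_eq_mul, mul_one, measureReal_def]
      have hu2int : IntegrableOn (fun x => u x ^ 2) (Icc (0:ℝ) 1) := by
        refine my_bddInt hIm hIfin ((hum.pow_const 2).aestronglyMeasurable) (M := 1) ?_
        intro x hx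
        rw [hu]
        by_cases hxS : x ∈ S
        · rw [indicator_of_mem hxS]; norm_num
        · rw [indicator_of_notMem hxS]; norm_num
      have hk2int : IntegrableOn (fun x => k x ^ 2) (Icc (0:ℝ) 1) := by
        refine my_bddInt hIm hIfin ((kmeas.pow_const 2).aestronglyMeasurable) (M := 1) ?_
        intro x hx
        have hb := kbd x hx
        rw [abs_of_nonneg (sq_nonneg _)]
        nlinarith [sq_abs (k x), abs_nonneg (k x)]
      have hcs : |∫ x in Icc (0:ℝ) 1, u x * k x|
          ≤ Real.sqrt (∫ x in Icc (0:ℝ) 1, u x ^ 2) * Real.sqrt (∫ x in Icc (0:ℝ) 1, k x ^ 2) :=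
        my_cs hum.aestronglyMeasurable kmeas.aestronglyMeasurable hu2int hk2int
      have husqrt : Real.sqrt (∫ x in Icc (0:ℝ) 1, u x ^ 2) ≤ 1 := by
        rw [hu2, show (1:ℝ) = Real.sqrt 1 by rw [Real.sqrt_one]]
        exact Real.sqrt_le_sqrt (subone S hSs)
      calc |∫ x in S, ∫ y in T, W x y| = |∫ x in Icc (0:ℝ) 1, u x * k x| := by rw [hSk]
      _ ≤ Real.sqrt (∫ x in Icc (0:ℝ) 1, u x ^ 2) * Real.sqrt (∫ x in Icc (0:ℝ) 1, k x ^ 2) := hcs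
      _ ≤ 1 * Real.sqrt (∫ x in Icc (0:ℝ) 1, k x ^ 2) :=
            mul_le_mul_of_nonneg_right husqrt (Real.sqrt_nonneg _)
      _ = Real.sqrt (∫ x in Icc (0:ℝ) 1, k x ^ 2) := one_mul _
      _ ≤ B * Real.sqrt m := hsqrtk
      _ ≤ B := hBm
  -- Part 2 : B ≤ √8 √C
  have part2 : B ≤ Real.sqrt 8 * Real.sqrt C := by
    refine hB.2 ?_
    rintro r ⟨f, hfm, hfn, rfl⟩
    -- f is L² normalized on [0,1]
    have c0 : ∫ x in Icc (0:ℝ) 1, f x ^ 2 = 1 := Real.sqrt_eq_one.1 hfn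
    have hf2int : IntegrableOn (fun x => f x ^ 2) (Icc (0:ℝ) 1) := by
      by_contra hcon
      rw [integral_undef hcon] at c0
      norm_num at c0
    have hf1int : IntegrableOn f (Icc (0:ℝ) 1) := by
      refine Integrable.mono'
        ((((integrableOn_const_iff (C := (1:ℝ))).2 (Or.inr hIfin)).add hf2int).div_const 2)
        hfm.aestronglyMeasurable ?_
      filter_upwards with x
      rw [Real.norm_eq_abs]
      show |f x| ≤ (1 + f x ^ 2)/2
      nlinarith [sq_nonneg (|f x| - 1), sq_abs (f x), abs_nonneg (f x)]
    have hf1 : ∫ y in Icc (0:ℝ) 1, |f y| ≤ 1 := by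
      have h := my_cs_abs (μ := volume.restrict (Icc (0:ℝ) 1)) (u := f) (v := fun _ => (1:ℝ))
        hfm.aestronglyMeasurable aestronglyMeasurable_const hf2int
        (by simpa using (integrableOn_const_iff (C := (1:ℝ))).2 (Or.inr hIfin))
      simp only [mul_one, one_pow] at h
      calc ∫ y in Icc (0:ℝ) 1, |f y| ≤ Real.sqrt (∫ x in Icc (0:ℝ) 1, f x ^ 2)
            * Real.sqrt (∫ _ in Icc (0:ℝ) 1, (1:ℝ)) := h
      _ = 1 := by
        rw [c0, Real.sqrt_one, one_mul]
        rw [setIntegral_const, smul_eq_mul, measureReal_def, hIone, mul_one, Real.sqrt_one]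
    -- the iterates of the operator
    set g : ℕ → ℝ → ℝ := fun n => Nat.rec f (fun _ ih x => ∫ y in Icc (0:ℝ) 1, W x y * ih y) n
      with hgdef
    have hg0 : g 0 = f := rfl
    have hgs : ∀ n, g (n + 1) = fun x => ∫ y in Icc (0:ℝ) 1, W x y * g n y := fun n => rfl
    have gmeas : ∀ n, Measurable (g n) := by
      intro n
      induction n with
      | zero => exact hfm
      | succ n ih => exact Tmeas (g n) ih
    -- boundedness/L¹ bookkeeping through the iteration
    have P : ∀ m : ℕ, ∃ S A : ℝ, 0 ≤ S ∧ 0 ≤ A ∧ (∀ x ∈ Icc (0:ℝ) 1, |g (m+1) x| ≤ S) ∧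
        ((∫ x in Icc (0:ℝ) 1, |g (m+1) x|) ≤ A) ∧ S * A ≤ (4*C)^m := by
      intro m
      induction m with
      | zero =>
        refine ⟨1, 1, zero_le_one, zero_le_one, ?_, ?_, by norm_num⟩
        · intro x hx
          exact le_trans (Tbd f hfm hf1int x hx) hf1
        · have hbd1 : ∀ x ∈ Icc (0:ℝ) 1, |g 1 x| ≤ 1 := by
            intro x hx
            exact le_trans (Tbd f hfm hf1int x hx) hf1
          calc ∫ x in Icc (0:ℝ) 1, |g 1 x| ≤ ∫ _ in Icc (0:ℝ) 1, (1:ℝ) := by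
                refine integral_mono_ae
                  (my_bddInt hIm hIfin (gmeas 1).aestronglyMeasurable hbd1).abs
                  ((integrableOn_const_iff (C := (1:ℝ))).2 (Or.inr hIfin)) ?_
                refine ae_restrict_of_forall_mem hIm ?_
                intro x hx
                simpa [abs_abs] using hbd1 x hx
          _ = 1 := by rw [setIntegral_const, smul_eq_mul, measureReal_def, hIone, one_mul]
      | succ m ih =>
        obtain ⟨S, A, hS0, hA0, hSb, hAb, hprod⟩ := ih
        have hbint : IntegrableOn (g (m+1)) (Icc (0:ℝ) 1) :=
          my_bddInt hIm hIfin (gmeas (m+1)).aestronglyMeasurable hSb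
        refine ⟨A, 4*C*S, hA0, by positivity, ?_, ?_, ?_⟩
        · intro x hx
          exact le_trans (Tbd (g (m+1)) (gmeas (m+1)) hbint x hx) hAb
        · have := key2 (g (m+1)) S (gmeas (m+1)) hS0 hSb
          exact this
        · calc A * (4*C*S) = (4*C) * (S*A) := by ring
          _ ≤ (4*C) * (4*C)^m := mul_le_mul_of_nonneg_left hprod (by positivity)
          _ = (4*C)^(m+1) := by rw [pow_succ]; ring
    -- integrability of squares of iterates
    have gsqint : ∀ n, IntegrableOn (fun x => g n x ^ 2) (Icc (0:ℝ) 1) := by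
      intro n
      cases n with
      | zero => exact hf2int
      | succ m =>
        obtain ⟨S, A, hS0, hA0, hSb, hAb, hprod⟩ := P m
        refine my_bddInt hIm hIfin ((gmeas (m+1)).pow_const 2).aestronglyMeasurable
          (M := S^2) ?_
        intro x hx
        rw [abs_of_nonneg (sq_nonneg _)]
        have := hSb x hx
        nlinarith [sq_abs (g (m+1) x), abs_nonneg (g (m+1) x)]
    have gint : ∀ n, IntegrableOn (g n) (Icc (0:ℝ) 1) := by
      intro n
      cases n with
      | zero => exact hf1int
      | succ m =>
        obtain ⟨S, A, hS0, hA0, hSb, hAb, hprod⟩ := P m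
        exact my_bddInt hIm hIfin (gmeas (m+1)).aestronglyMeasurable hSb
    set c : ℕ → ℝ := fun n => ∫ x in Icc (0:ℝ) 1, g n x ^ 2 with hcdef
    have hcnn : ∀ n, 0 ≤ c n := fun n => integral_nonneg fun x => sq_nonneg _
    have hc0 : c 0 = 1 := c0
    have hcle : ∀ m : ℕ, c (m+1) ≤ (4*C)^m := by
      intro m
      obtain ⟨S, A, hS0, hA0, hSb, hAb, hprod⟩ := P m
      have step : c (m+1) ≤ ∫ x in Icc (0:ℝ) 1, S * |g (m+1) x| := by
        refine integral_mono_ae (gsqint (m+1)) (((gint (m+1)).abs).const_mul S) ?_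
        refine ae_restrict_of_forall_mem hIm ?_
        intro x hx
        show g (m+1) x ^ 2 ≤ S * |g (m+1) x|
        have := hSb x hx
        nlinarith [sq_abs (g (m+1) x), abs_nonneg (g (m+1) x)]
      calc c (m+1) ≤ ∫ x in Icc (0:ℝ) 1, S * |g (m+1) x| := step
      _ = S * ∫ x in Icc (0:ℝ) 1, |g (m+1) x| := integral_const_mul S _
      _ ≤ S * A := mul_le_mul_of_nonneg_left hAb hS0
      _ ≤ (4*C)^m := hprod
    -- the adjoint identity c (n+1) = ∫ g n * g (n+2)
    have hadj : ∀ n : ℕ, c (n+1) = ∫ x in Icc (0:ℝ) 1, g n x * g (n+2) x := by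
      intro n
      obtain ⟨S, A, hS0, hA0, hSb, hAb, hprod⟩ := P n
      have e1 : c (n+1) = ∫ x in Icc (0:ℝ) 1, (∫ y in Icc (0:ℝ) 1, W x y * g n y) * g (n+1) x := by
        refine integral_congr_ae (Filter.Eventually.of_forall ?_)
        intro x
        show g (n+1) x ^ 2 = (∫ y in Icc (0:ℝ) 1, W x y * g n y) * g (n+1) x
        have e : (∫ y in Icc (0:ℝ) 1, W x y * g n y) = g (n+1) x := rfl
        rw [e]; ring
      have e2 : ∀ x : ℝ, (∫ y in Icc (0:ℝ) 1, W x y * g n y) * g (n+1) x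
          = ∫ y in Icc (0:ℝ) 1, W x y * g n y * g (n+1) x :=
        fun x => (integral_mul_const (g (n+1) x) _).symm
      have hswap2 : ∫ x in Icc (0:ℝ) 1, ∫ y in Icc (0:ℝ) 1, W x y * g n y * g (n+1) x
          = ∫ y in Icc (0:ℝ) 1, ∫ x in Icc (0:ℝ) 1, W x y * g n y * g (n+1) x := by
        refine my_swap (F := fun x y => W x y * g n y * g (n+1) x)
          (by exact ((hMeas.mul ((gmeas n).comp measurable_snd)).mul
            ((gmeas (n+1)).comp measurable_fst))) hIm hIm
          (φ := fun _ => S) (ψ := g n)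
          ((integrableOn_const_iff (C := S)).2 (Or.inr hIfin)) (gint n) ?_
        intro x hx y hy
        rw [abs_mul, abs_mul]
        have h1 : |W x y| ≤ 1 := hWbd x hx y hy
        have h2 : |g (n+1) x| ≤ S := hSb x hx
        have h3 : S ≤ |S| := le_abs_self S
        have t1 : |W x y| * |g n y| ≤ |g n y| := by nlinarith [abs_nonneg (g n y)]
        calc |W x y| * |g n y| * |g (n+1) x| ≤ |g n y| * |g (n+1) x| :=
              mul_le_mul_of_nonneg_right t1 (abs_nonneg _)
        _ ≤ |g n y| * S := mul_le_mul_of_nonneg_left h2 (abs_nonneg _)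
        _ ≤ |S| * |g n y| := by nlinarith [abs_nonneg (g n y)]
      have e3 : ∀ y : ℝ, ∫ x in Icc (0:ℝ) 1, W x y * g n y * g (n+1) x
          = g n y * g (n+2) y := by
        intro y
        have s1 : ∫ x in Icc (0:ℝ) 1, W x y * g n y * g (n+1) x
            = (∫ x in Icc (0:ℝ) 1, W x y * g (n+1) x) * g n y := by
          rw [← integral_mul_const]
          refine integral_congr_ae (Filter.Eventually.of_forall ?_)
          intro x
          show W x y * g n y * g (n+1) x = W x y * g (n+1) x * g n y
          ring
        have s2 : ∫ x in Icc (0:ℝ) 1, W x y * g (n+1) x = g (n+2) y := by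
          show _ = ∫ x in Icc (0:ℝ) 1, W y x * g (n+1) x
          refine integral_congr_ae (Filter.Eventually.of_forall ?_)
          intro x
          show W x y * g (n+1) x = W y x * g (n+1) x
          rw [hSymm]
        rw [s1, s2]; ring
      rw [e1]
      rw [integral_congr_ae (Filter.Eventually.of_forall e2), hswap2,
        integral_congr_ae (Filter.Eventually.of_forall e3)]
    -- Cauchy–Schwarz chain
    have hcs2 : ∀ n : ℕ, c (n+1) ≤ Real.sqrt (c n) * Real.sqrt (c (n+2)) := by
      intro n
      rw [hadj n]
      exact le_trans (le_abs_self _)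
        (my_cs (gmeas n).aestronglyMeasurable (gmeas (n+2)).aestronglyMeasurable
          (gsqint n) (gsqint (n+2)))
    -- conclude
    by_cases hc1 : c 1 = 0
    · have : Real.sqrt (c 1) = 0 := by rw [hc1, Real.sqrt_zero]
      calc Real.sqrt (∫ x in Icc (0:ℝ) 1, (∫ y in Icc (0:ℝ) 1, W x y * f y) ^ 2)
          = Real.sqrt (c 1) := by rw [hcdef]; rfl
      _ = 0 := this
      _ ≤ Real.sqrt 8 * Real.sqrt C := by positivity
    · have hc1pos : 0 < c 1 := lt_of_le_of_ne (hcnn 1) (Ne.symm hc1)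
      -- positivity and growth of the chain
      have Q : ∀ n : ℕ, 0 < c n ∧ c 1 * c n ≤ c (n+1) := by
        intro n
        induction n with
        | zero => exact ⟨by rw [hc0]; norm_num, by simp [hc0]⟩
        | succ n ih =>
          obtain ⟨hpos, hgrow⟩ := ih
          have hpos1 : 0 < c (n+1) := lt_of_lt_of_le (by positivity) hgrow
          refine ⟨hpos1, ?_⟩
          have hsq : c (n+1) ^ 2 ≤ c n * c (n+2) := by
            have h := hcs2 n
            have h2 : c (n+1) ^ 2 ≤ (Real.sqrt (c n) * Real.sqrt (c (n+2))) ^ 2 := by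
              refine pow_le_pow_left₀ (hcnn (n+1)) h 2
            calc c (n+1) ^ 2 ≤ (Real.sqrt (c n) * Real.sqrt (c (n+2))) ^ 2 := h2
            _ = c n * c (n+2) := by
                rw [mul_pow, Real.sq_sqrt (hcnn n), Real.sq_sqrt (hcnn (n+2))]
          -- from c1 * cn ≤ c(n+1) and c(n+1)² ≤ cn c(n+2), deduce c1 c(n+1) ≤ c(n+2)
          nlinarith [hcnn (n+2), hcnn n, hpos, hpos1, hc1pos]
      have R : ∀ n : ℕ, c 1 ^ n ≤ c n := by
        intro n
        induction n with
        | zero => rw [pow_zero, hc0]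
        | succ n ih =>
          calc c 1 ^ (n+1) = c 1 * c 1 ^ n := by rw [pow_succ]; ring
          _ ≤ c 1 * c n := mul_le_mul_of_nonneg_left ih hc1pos.le
          _ ≤ c (n+1) := (Q n).2
      have keyineq : ∀ m : ℕ, c 1 ^ (m+1) ≤ (4*C)^m := fun m => le_trans (R (m+1)) (hcle m)
      have hCpos : 0 < C := by
        rcases eq_or_lt_of_le hC0 with h | h
        · exfalso
          have := keyineq 1
          rw [← h] at this
          simp at this
          nlinarith [hc1pos]
        · exact h
      have hc14C : c 1 ≤ 4*C := by
        by_contra hcon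
        push_neg at hcon
        have hx1 : 1 < c 1 / (4*C) := by
          rw [lt_div_iff₀ (by positivity)]
          linarith
        obtain ⟨n, hn⟩ := pow_unbounded_of_one_lt (1/(4*C)) hx1
        have hb1 : (c 1 / (4*C)) ^ (n+1) ≤ 1/(4*C) := by
          have hk := keyineq n
          rw [div_pow]
          rw [div_le_div_iff₀ (by positivity) (by positivity)]
          calc c 1 ^ (n+1) * (4*C) = c 1 ^ (n+1) * (4*C) := rfl
          _ ≤ (4*C)^n * (4*C) := mul_le_mul_of_nonneg_right hk (by positivity)
          _ = 1 * (4*C)^(n+1) := by rw [pow_succ]; ring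
        have hb2 : (c 1 / (4*C)) ^ n ≤ (c 1 / (4*C)) ^ (n+1) := by
          have h0 : (0:ℝ) ≤ (c 1 / (4*C))^n := by positivity
          calc (c 1 / (4*C)) ^ n = (c 1 / (4*C)) ^ n * 1 := by rw [mul_one]
          _ ≤ (c 1 / (4*C)) ^ n * (c 1 / (4*C)) := mul_le_mul_of_nonneg_left hx1.le h0
          _ = (c 1 / (4*C)) ^ (n+1) := by rw [pow_succ]
        linarith
      have final : Real.sqrt (c 1) ≤ Real.sqrt 8 * Real.sqrt C := by
        calc Real.sqrt (c 1) ≤ Real.sqrt (4*C) := Real.sqrt_le_sqrt hc14C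
        _ = Real.sqrt 4 * Real.sqrt C := Real.sqrt_mul (by norm_num) C
        _ ≤ Real.sqrt 8 * Real.sqrt C := by
            refine mul_le_mul_of_nonneg_right ?_ (Real.sqrt_nonneg C)
            refine Real.sqrt_le_sqrt (by norm_num)
      calc Real.sqrt (∫ x in Icc (0:ℝ) 1, (∫ y in Icc (0:ℝ) 1, W x y * f y) ^ 2)
          = Real.sqrt (c 1) := by rw [hcdef]; rfl
      _ ≤ Real.sqrt 8 * Real.sqrt C := final
  exact ⟨part1, part2⟩
end

section
/- Let G be a simple graph on N vertices with Laplacian eigenvalues λ₁ ≤ … ≤ λ_N and degrees reordered non-decreasingly d_{(1)} ≤ … ≤ d_{(N)}. Define the step functions μ_N(x) = Σᵢ (λᵢ/N) 1_{B_i^N}(x) and d̃_N(x) = Σᵢ (d_{(i)}/N) 1_{B_i^N}(x) on [0,1], where B_i^N are the N equal subintervals of [0,1]. Then ‖μ_N − d̃_N‖₂ ≤ ‖A‖_F / N^{3/2}, where A is the adjacency matrix and ‖A‖_F its Frobenius norm. -/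
open MeasureTheory Set Matrix

noncomputable def stepIdx (N : ℕ) (hN : 0 < N) (x : ℝ) : Fin N :=
  ⟨min ⌊x * N⌋₊ (N - 1), lt_of_le_of_lt (min_le_right _ _) (Nat.sub_lt hN one_pos)⟩

lemma stepIdx_eq {N : ℕ} (hN : 0 < N) (i : Fin N) {x : ℝ}
    (hx : x ∈ Set.Ico ((i : ℝ)/N) (((i : ℝ)+1)/N)) : stepIdx N hN x = i := by
  obtain ⟨h1, h2⟩ := hx
  have hNpos : (0:ℝ) < N := by exact_mod_cast hN
  have hge : (i:ℝ) ≤ x * N := by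
    rw [div_le_iff₀ hNpos] at h1; linarith
  have hlt : x * N < (i:ℝ) + 1 := by
    rw [lt_div_iff₀ hNpos] at h2; linarith
  have hx0 : 0 ≤ x * N := le_trans (by positivity) hge
  have hfl : ⌊x * N⌋₊ = i := by
    rw [Nat.floor_eq_iff hx0]
    exact ⟨hge, hlt⟩
  have : min ⌊x * N⌋₊ (N-1) = (i:ℕ) := by
    rw [hfl]; exact min_eq_left (Nat.le_sub_one_of_lt i.2)
  exact Fin.ext this

lemma mem_Ico_stepIdx {N : ℕ} (hN : 0 < N) {x : ℝ} (hx : x ∈ Set.Ico (0:ℝ) 1) :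
    x ∈ Set.Ico (((stepIdx N hN x : ℕ) : ℝ)/N) ((((stepIdx N hN x : ℕ) : ℝ)+1)/N) := by
  obtain ⟨h0, h1⟩ := hx
  have hNpos : (0:ℝ) < N := by exact_mod_cast hN
  have hx0 : 0 ≤ x * N := by positivity
  have hlt : ⌊x * N⌋₊ < N := by
    rw [Nat.floor_lt hx0]
    nlinarith
  have hmin : min ⌊x * N⌋₊ (N - 1) = ⌊x * N⌋₊ := min_eq_left (Nat.le_sub_one_of_lt hlt)
  have hval : ((stepIdx N hN x : ℕ) : ℝ) = (⌊x * N⌋₊ : ℝ) := by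
    simp [stepIdx, hmin]
  rw [hval]
  constructor
  · rw [div_le_iff₀ hNpos]; exact Nat.floor_le hx0
  · rw [lt_div_iff₀ hNpos]; exact Nat.lt_floor_add_one _

lemma integral_step {N : ℕ} (hN : 0 < N) (g : Fin N → ℝ) :
    ∫ x in Set.Icc (0:ℝ) 1, g (stepIdx N hN x) = (∑ i, g i) / N := by
  have hNpos : (0:ℝ) < N := by exact_mod_cast hN
  rw [integral_Icc_eq_integral_Ico]
  have hunion : Set.Ico (0:ℝ) 1 = ⋃ i ∈ (Finset.univ : Finset (Fin N)),
      Set.Ico ((i:ℝ)/N) (((i:ℝ)+1)/N) := by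
    ext x
    simp only [Finset.mem_univ, iUnion_true, mem_iUnion]
    constructor
    · intro hx
      exact ⟨stepIdx N hN x, mem_Ico_stepIdx hN hx⟩
    · rintro ⟨i, h1, h2⟩
      constructor
      · exact le_trans (by positivity) h1
      · calc x < ((i:ℝ)+1)/N := h2
          _ ≤ 1 := by
            rw [div_le_one hNpos]
            exact_mod_cast Nat.succ_le_of_lt i.2
  rw [hunion, integral_biUnion_finset]
  · have key : ∀ i : Fin N, ∫ x in Set.Ico ((i:ℝ)/N) (((i:ℝ)+1)/N), g (stepIdx N hN x)
        = g i / N := by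
      intro i
      rw [setIntegral_congr_fun measurableSet_Ico (fun x hx => by rw [stepIdx_eq hN i hx]),
        setIntegral_const, measureReal_def, Real.volume_Ico]
      rw [ENNReal.toReal_ofReal (by rw [sub_nonneg]; gcongr <;> linarith), smul_eq_mul]
      field_simp
      ring
    simp_rw [key]
    rw [Finset.sum_div]
  · intro i _; exact measurableSet_Ico
  · intro i _ j _ hij
    rw [Function.onFun, Set.Ico_disjoint_Ico]
    rcases lt_or_gt_of_ne hij with h | h
    · refine le_trans (min_le_left _ _) (le_trans ?_ (le_max_right _ _))
      gcongr
      exact_mod_cast Nat.succ_le_of_lt (Fin.lt_iff_val_lt_val.mp h)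
    · refine le_trans (min_le_right _ _) (le_trans ?_ (le_max_left _ _))
      gcongr
      exact_mod_cast Nat.succ_le_of_lt (Fin.lt_iff_val_lt_val.mp h)
  · intro i _
    apply IntegrableOn.congr_fun (f := fun _ => g i)
    · exact integrableOn_const (by rw [Real.volume_Ico]; exact ENNReal.ofReal_ne_top)
    · exact fun x hx => by rw [stepIdx_eq hN i hx]
    · exact measurableSet_Ico

lemma ds_rearrange {N : ℕ} (S : Matrix (Fin N) (Fin N) ℝ)
    (hS : S ∈ doublyStochastic ℝ (Fin N)) (a b : Fin N → ℝ)
    (ha : Monotone a) (hb : Monotone b) :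
    ∑ k, ∑ l, S k l * a k * b l ≤ ∑ k, a k * b k := by
  obtain ⟨w, hw0, hw1, hw⟩ := exists_eq_sum_perm_of_mem_doublyStochastic hS
  have hp : ∀ (π : Equiv.Perm (Fin N)) (k l : Fin N),
      (π.permMatrix ℝ) k l = if l = π k then 1 else 0 := by
    intro π k l
    simp [Equiv.Perm.permMatrix, PEquiv.toMatrix_apply, Equiv.toPEquiv_apply, Option.mem_def,
      eq_comm]
  have hentry : ∀ k l, S k l = ∑ π : Equiv.Perm (Fin N), w π * (π.permMatrix ℝ) k l := by
    intro k l
    rw [← hw]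
    simp [Matrix.sum_apply, Matrix.smul_apply, smul_eq_mul]
  have step : ∀ k, ∑ l, S k l * a k * b l
      = ∑ π : Equiv.Perm (Fin N), w π * (a k * b (π k)) := by
    intro k
    simp_rw [hentry, Finset.sum_mul]
    rw [Finset.sum_comm]
    apply Finset.sum_congr rfl
    intro π _
    rw [Finset.sum_congr rfl (fun l _ => by rw [hp π k l])]
    simp [ite_mul, mul_assoc]
  calc ∑ k, ∑ l, S k l * a k * b l
      = ∑ π : Equiv.Perm (Fin N), w π * ∑ k, a k * b (π k) := by
        simp_rw [step, Finset.mul_sum]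
        rw [Finset.sum_comm]
    _ ≤ ∑ π : Equiv.Perm (Fin N), w π * ∑ k, a k * b k := by
        apply Finset.sum_le_sum
        intro π _
        exact mul_le_mul_of_nonneg_left
          ((ha.monovary hb).sum_mul_comp_perm_le_sum_mul (σ := π)) (hw0 π)
    _ = ∑ k, a k * b k := by rw [← Finset.sum_mul, hw1, one_mul]

lemma key_ineq {N : ℕ} (G : SimpleGraph (Fin N)) [DecidableRel G.Adj]
    (hHerm : (G.lapMatrix ℝ).IsHermitian)
    (lam : Fin N → ℝ) (hlmono : Monotone lam)
    (hlperm : ∃ σ : Equiv.Perm (Fin N), lam = hHerm.eigenvalues ∘ σ)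
    (d : Fin N → ℝ) (hdmono : Monotone d)
    (hdperm : ∃ σ : Equiv.Perm (Fin N), d = (fun i => (G.degree i : ℝ)) ∘ σ) :
    ∑ k, (lam k - d k)^2 ≤ ∑ i, ∑ j, (G.adjMatrix ℝ i j)^2 := by
  set L := G.lapMatrix ℝ with hL
  set U : Matrix (Fin N) (Fin N) ℝ := (hHerm.eigenvectorUnitary : Matrix (Fin N) (Fin N) ℝ)
    with hU
  set e := hHerm.eigenvalues with he
  obtain ⟨σl, hσl⟩ := hlperm
  obtain ⟨σd, hσd⟩ := hdperm
  have hUU : star U * U = 1 := hHerm.eigenvectorUnitary.2.1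
  have hUU' : U * star U = 1 := hHerm.eigenvectorUnitary.2.2
  have hspec : L = U * Matrix.diagonal e * star U := by
    simpa using hHerm.spectral_theorem
  -- entries of L
  have hLij : ∀ i j, L i j = ∑ k, U i k * e k * U j k := by
    intro i j
    rw [hspec]
    simp [Matrix.mul_apply, Matrix.diagonal, Matrix.conjTranspose_apply, Finset.sum_mul,
      mul_comm, mul_assoc, mul_left_comm]
  -- diagonal entries are degrees
  have hdiag : ∀ i, L i i = (G.degree i : ℝ) := by
    intro i
    simp [hL, SimpleGraph.lapMatrix, SimpleGraph.degMatrix]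
  -- S matrix
  set S : Matrix (Fin N) (Fin N) ℝ := fun i j => (U i j)^2 with hSdef
  have hrow : ∀ i, ∑ j, S i j = 1 := by
    intro i
    have := congrArg (fun M => M i i) hUU'
    simpa [Matrix.mul_apply, Matrix.conjTranspose_apply, Matrix.one_apply, hSdef, sq] using this
  have hcol : ∀ j, ∑ i, S i j = 1 := by
    intro j
    have := congrArg (fun M => M j j) hUU
    simpa [Matrix.mul_apply, Matrix.conjTranspose_apply, Matrix.one_apply, hSdef, sq] using this
  -- T matrix
  set T : Matrix (Fin N) (Fin N) ℝ := fun k l => S (σd k) (σl l) with hTdef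
  have hT : T ∈ doublyStochastic ℝ (Fin N) := by
    rw [mem_doublyStochastic_iff_sum]
    refine ⟨fun i j => sq_nonneg _, fun i => ?_, fun j => ?_⟩
    · rw [show ∑ j, T i j = ∑ j, S (σd i) (σl j) from rfl, Equiv.sum_comp σl (fun j => S (σd i) j)]
      exact hrow _
    · rw [show ∑ i, T i j = ∑ i, S (σd i) (σl j) from rfl, Equiv.sum_comp σd (fun i => S i (σl j))]
      exact hcol _
  -- trace identity: ∑ deg² = ∑∑ T d lam
  have htrace : ∑ k, d k ^ 2 = ∑ k, ∑ l, T k l * d k * lam l := by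
    have h1 : ∀ i, (G.degree i : ℝ)^2 = ∑ j, S i j * (G.degree i : ℝ) * e j := by
      intro i
      have : (G.degree i : ℝ) = ∑ j, S i j * e j := by
        rw [← hdiag i, hLij i i]
        apply Finset.sum_congr rfl
        intro j _
        simp [hSdef, sq]; ring
      calc (G.degree i : ℝ)^2 = (G.degree i : ℝ) * ∑ j, S i j * e j := by rw [← this, sq]
        _ = ∑ j, S i j * (G.degree i : ℝ) * e j := by rw [Finset.mul_sum]; apply Finset.sum_congr rfl; intros; ring
    calc ∑ k, d k ^ 2 = ∑ k, ((G.degree (σd k) : ℝ))^2 := by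
          apply Finset.sum_congr rfl; intro k _; rw [hσd]; rfl
      _ = ∑ i, ((G.degree i : ℝ))^2 := by
          exact Equiv.sum_comp σd (fun i => ((G.degree i : ℝ))^2)
      _ = ∑ i, ∑ j, S i j * (G.degree i : ℝ) * e j := Finset.sum_congr rfl (fun i _ => h1 i)
      _ = ∑ k, ∑ l, T k l * d k * lam l := by
          rw [← Equiv.sum_comp σd (fun i => ∑ j, S i j * (G.degree i : ℝ) * e j)]
          apply Finset.sum_congr rfl
          intro k _
          rw [← Equiv.sum_comp σl (fun j => S (σd k) j * (G.degree (σd k) : ℝ) * e j)]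
          apply Finset.sum_congr rfl
          intro l _
          rw [hσd, hσl]
          rfl
  -- key: ∑ d² ≤ ∑ lam d
  have hkey : ∑ k, d k ^ 2 ≤ ∑ k, d k * lam k := by
    rw [htrace]
    exact ds_rearrange T hT d lam hdmono hlmono
  -- sum of eigenvalue squares = ∑∑ L²
  have hsumL : ∑ i, ∑ j, L i j ^ 2 = ∑ k, e k ^ 2 := by
    have htr : Matrix.trace (L * L) = ∑ k, e k ^ 2 := by
      have hLL : L * L = U * (Matrix.diagonal e * Matrix.diagonal e) * star U := by
        rw [hspec]
        calc U * Matrix.diagonal e * star U * (U * Matrix.diagonal e * star U)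
            = U * Matrix.diagonal e * (star U * U) * Matrix.diagonal e * star U := by
              simp only [Matrix.mul_assoc]
          _ = U * (Matrix.diagonal e * Matrix.diagonal e) * star U := by
              rw [hUU]; simp only [Matrix.mul_one, Matrix.mul_assoc]
      rw [hLL, Matrix.trace_mul_cycle, ← Matrix.mul_assoc, hUU, Matrix.one_mul,
        Matrix.diagonal_mul_diagonal, Matrix.trace_diagonal]
      apply Finset.sum_congr rfl; intros; rw [sq]
    rw [← htr, Matrix.trace]
    simp only [Matrix.diag_apply, Matrix.mul_apply]
    apply Finset.sum_congr rfl
    intro i _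
    apply Finset.sum_congr rfl
    intro j _
    rw [sq]
    congr 1
    have := congrArg (fun M => M i j) hHerm
    simpa [Matrix.conjTranspose_apply] using this.symm
  -- decompose ∑∑ L² = ∑ deg² + ∑∑ A²
  have hdecomp : ∑ i, ∑ j, L i j ^ 2
      = ∑ i, (G.degree i : ℝ)^2 + ∑ i, ∑ j, (G.adjMatrix ℝ i j)^2 := by
    have hpt : ∀ i j, L i j ^ 2
        = (if i = j then (G.degree i : ℝ)^2 else 0) + (G.adjMatrix ℝ i j)^2 := by
      intro i j
      by_cases h : i = j
      · subst h
        simp [hdiag i, SimpleGraph.adjMatrix]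
      · have hLoff : L i j = - (G.adjMatrix ℝ i j) := by
          simp [hL, SimpleGraph.lapMatrix, SimpleGraph.degMatrix, h]
        rw [hLoff]
        simp [h]
    simp_rw [hpt, Finset.sum_add_distrib]
    congr 1
    simp [Finset.sum_ite_eq]
  -- finish
  have hsum_d : ∑ k, d k ^ 2 = ∑ i, (G.degree i : ℝ)^2 := by
    rw [← Equiv.sum_comp σd (fun i => ((G.degree i : ℝ))^2)]
    apply Finset.sum_congr rfl
    intro k _
    rw [hσd]; rfl
  have expand : ∑ k, (lam k - d k)^2 = ∑ k, lam k ^2 - 2 * ∑ k, d k * lam k + ∑ k, d k ^2 := by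
    rw [Finset.mul_sum, ← Finset.sum_sub_distrib, ← Finset.sum_add_distrib]
    apply Finset.sum_congr rfl
    intros; ring
  have hsum_lam : ∑ k, lam k ^ 2 = ∑ k, e k ^ 2 := by
    rw [← Equiv.sum_comp σl (fun k => e k ^2)]
    apply Finset.sum_congr rfl
    intro k _
    rw [hσl]; rfl
  rw [expand]
  have : ∑ k, e k ^2 = ∑ k, d k ^2 + ∑ i, ∑ j, (G.adjMatrix ℝ i j)^2 := by
    rw [← hsumL, hdecomp, hsum_d]
  linarith [hkey, hsum_lam, this]

/-- For a simple graph on N vertices with sorted Laplacian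
eigenvalues λᵢ and sorted degrees d₍ᵢ₎, the step functions
μ_N(x) = λᵢ/N and d̃_N(x) = d₍ᵢ₎/N on the N equal subintervals of [0,1] satisfy
‖μ_N − d̃_N‖₂ ≤ ‖A‖_F / N^{3/2}. -/
theorem stmt14 {N : ℕ} (hN : 0 < N) (G : SimpleGraph (Fin N)) [DecidableRel G.Adj]
    (hHerm : (G.lapMatrix ℝ).IsHermitian)
    (lam : Fin N → ℝ) (hlmono : Monotone lam)
    (hlperm : ∃ σ : Equiv.Perm (Fin N), lam = hHerm.eigenvalues ∘ σ)
    (d : Fin N → ℝ) (hdmono : Monotone d)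
    (hdperm : ∃ σ : Equiv.Perm (Fin N), d = (fun i => (G.degree i : ℝ)) ∘ σ) :
    Real.sqrt (∫ x in Icc (0:ℝ) 1,
        (lam (stepIdx N hN x) / N - d (stepIdx N hN x) / N) ^ 2)
      ≤ Real.sqrt (∑ i, ∑ j, (G.adjMatrix ℝ i j) ^ 2) / (N : ℝ) ^ ((3 : ℝ) / 2) := by
  have hNpos : (0:ℝ) < N := by exact_mod_cast hN
  have hint : (∫ x in Icc (0:ℝ) 1,
      (lam (stepIdx N hN x) / N - d (stepIdx N hN x) / N) ^ 2)
      = (∑ i, (lam i / N - d i / N)^2) / N :=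
    integral_step hN (fun i => (lam i / N - d i / N)^2)
  have hrw : (∑ i, (lam i / N - d i / N)^2) / (N:ℝ)
      = (∑ i, (lam i - d i)^2) / (N:ℝ)^3 := by
    rw [Finset.sum_div, Finset.sum_div]
    apply Finset.sum_congr rfl
    intros
    rw [div_sub_div_same, div_pow, div_div, ← pow_succ]
  have h32 : (N:ℝ) ^ ((3:ℝ)/2) = Real.sqrt ((N:ℝ)^3) := by
    rw [Real.sqrt_eq_rpow, ← Real.rpow_natCast (N:ℝ) 3, ← Real.rpow_mul (Nat.cast_nonneg N)]
    norm_num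
  rw [hint, hrw, h32, ← Real.sqrt_div (by positivity)]
  apply Real.sqrt_le_sqrt
  exact (div_le_div_iff_of_pos_right (by positivity)).mpr (key_ineq G hHerm lam hlmono hlperm d hdmono hdperm)
end
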